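/- arXiv:1707.01242 — 2 statements merged into one kernel-verified Lean document; each statement's English description precedes it below -/
import Mathlib

section
/- Let v ∈ ℝⁿ be a unit vector and θ ∈ ℝ. The degree-1 Chow parameters of the linear threshold function f(x) = sign(v·x + θ) with respect to the standard Gaussian N(0,I) are 2·G(θ)·v, where G is the standard one-dimensional Gaussian density; that is, E_{X∼N(0,I)}[f(X)·X] = 2·G(θ)·v. -/
open MeasureTheory ProbabilityTheory
open Real Set Filter
open scoped NNReal ENNReal

noncomputable def sgn (t : ℝ) : ℝ := if 0 ≤ t then 1 else -1

noncomputable def gpdf (t : ℝ) : ℝ := (Real.sqrt (2 * Real.pi))⁻¹ * Real.exp (-t ^ 2 / 2)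

noncomputable def g2 (s b : ℝ) : ℝ := (Real.sqrt (2 * Real.pi * s))⁻¹ * Real.exp (-b ^ 2 / (2 * s))

lemma measurable_sgn : Measurable sgn :=
  Measurable.ite (measurableSet_le measurable_const measurable_id) measurable_const
    measurable_const

lemma abs_sgn_le (t : ℝ) : |sgn t| ≤ 1 := by
  unfold sgn; split <;> simp

lemma gpdf_eq (t : ℝ) : gpdf t = g2 1 t := by simp [gpdf, g2]

lemma gpdf_even (t : ℝ) : gpdf (-t) = gpdf t := by simp [gpdf]

lemma gaussianPDFReal_one_eq (t : ℝ) : gaussianPDFReal 0 1 t = gpdf t := by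
  simp [gaussianPDFReal, gpdf]

lemma integral_gaussianReal_eq (f : ℝ → ℝ) :
    ∫ t, f t ∂(gaussianReal 0 1) = ∫ t, f t * gpdf t := by
  rw [gaussianReal_of_var_ne_zero _ one_ne_zero]
  have h : (gaussianPDF 0 1) = fun t => ((Real.toNNReal (gaussianPDFReal 0 1 t) : ℝ≥0) : ℝ≥0∞) :=
    rfl
  rw [h, integral_withDensity_eq_integral_smul
    ((measurable_gaussianPDFReal 0 1).real_toNNReal)]
  congr 1
  ext t
  rw [NNReal.smul_def, smul_eq_mul, Real.coe_toNNReal _ (gaussianPDFReal_nonneg 0 1 t),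
    gaussianPDFReal_one_eq, mul_comm]

lemma integrable_id_mul_gpdf : Integrable (fun t : ℝ => t * gpdf t) := by
  have h := (integrable_mul_exp_neg_mul_sq (b := 2⁻¹) (by norm_num)).const_mul
    ((Real.sqrt (2 * Real.pi))⁻¹)
  refine h.congr (ae_of_all _ fun t => ?_)
  simp only [gpdf]
  ring_nf

lemma integral_id_mul_gpdf_Ioi (r : ℝ) : ∫ t in Ioi r, t * gpdf t = gpdf r := by
  have hderiv : ∀ x ∈ Ici r, HasDerivAt (fun t => -gpdf t) (x * gpdf x) x := by
    intro x _
    have : HasDerivAt (fun t : ℝ => -t ^ 2 / 2) (-x) x := by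
      have := ((hasDerivAt_pow 2 x).neg).div_const 2
      refine this.congr_deriv ?_
      simp; ring
    have h2 := (this.exp.const_mul ((Real.sqrt (2 * Real.pi))⁻¹)).neg
    simp only [gpdf]
    refine h2.congr_deriv ?_
    ring
  have htend : Tendsto (fun t => -gpdf t) atTop (nhds 0) := by
    rw [show (0:ℝ) = -((Real.sqrt (2 * Real.pi))⁻¹ * 0) by ring]
    refine ((Real.tendsto_exp_atBot.comp ?_).const_mul _).neg
    have : Tendsto (fun t : ℝ => t ^ 2 / 2) atTop atTop :=
      (tendsto_pow_atTop two_ne_zero).atTop_div_const (by norm_num)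
    exact tendsto_neg_atBot_iff.mpr (by simpa [neg_div] using this) |>.congr (fun t => by ring)
  have := integral_Ioi_of_hasDerivAt_of_tendsto' hderiv
    integrable_id_mul_gpdf.integrableOn htend
  simpa using this

lemma integral_id_mul_gpdf_Iic (r : ℝ) : ∫ t in Iic r, t * gpdf t = -gpdf r := by
  have hderiv : ∀ x ∈ Iic r, HasDerivAt (fun t => -gpdf t) (x * gpdf x) x := by
    intro x _
    have : HasDerivAt (fun t : ℝ => -t ^ 2 / 2) (-x) x := by
      have := ((hasDerivAt_pow 2 x).neg).div_const 2
      refine this.congr_deriv ?_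
      simp; ring
    have h2 := (this.exp.const_mul ((Real.sqrt (2 * Real.pi))⁻¹)).neg
    simp only [gpdf]
    refine h2.congr_deriv ?_
    ring
  have htend : Tendsto (fun t => -gpdf t) atBot (nhds 0) := by
    rw [show (0:ℝ) = -((Real.sqrt (2 * Real.pi))⁻¹ * 0) by ring]
    refine ((Real.tendsto_exp_atBot.comp ?_).const_mul _).neg
    have : Tendsto (fun t : ℝ => t ^ 2 / 2) atBot atTop := by
      have h := (((tendsto_pow_atTop (two_ne_zero)).atTop_div_const
        (by norm_num : (0:ℝ) < 2)).comp tendsto_neg_atBot_atTop)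
      exact h.congr (fun t => by simp [neg_pow])
    exact tendsto_neg_atBot_iff.mpr (by simpa [neg_div] using this) |>.congr (fun t => by ring)
  have := integral_Iic_of_hasDerivAt_of_tendsto' hderiv
    integrable_id_mul_gpdf.integrableOn htend
  simpa using this

lemma continuous_gpdf : Continuous gpdf := by
  unfold gpdf
  fun_prop

lemma gpdf_nonneg (t : ℝ) : 0 ≤ gpdf t := by
  unfold gpdf; positivity

lemma integrable_sgn_mul (c b : ℝ) :
    Integrable (fun t : ℝ => sgn (c * t + b) * (t * gpdf t)) := by
  refine Integrable.mono' integrable_id_mul_gpdf.abs ?_ (ae_of_all _ fun t => ?_)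
  · exact ((measurable_sgn.comp ((measurable_id.const_mul c).add_const b)).mul
      (measurable_id.mul continuous_gpdf.measurable)).aestronglyMeasurable
  · rw [Real.norm_eq_abs, abs_mul]
    calc |sgn (c * t + b)| * |t * gpdf t| ≤ 1 * |t * gpdf t| :=
          mul_le_mul_of_nonneg_right (abs_sgn_le _) (abs_nonneg _)
    _ = |t * gpdf t| := one_mul _

lemma g2_sq (c b : ℝ) (hc : c ≠ 0) : g2 (c ^ 2) b = |c|⁻¹ * gpdf (b / c) := by
  unfold g2 gpdf
  rw [show 2 * Real.pi * c ^ 2 = (2 * Real.pi) * c ^ 2 by ring,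
    Real.sqrt_mul (by positivity), Real.sqrt_sq_eq_abs, mul_inv]
  rw [show -(b / c) ^ 2 / 2 = -b ^ 2 / (2 * c ^ 2) by ring]
  ring

lemma lemA (c b : ℝ) (hc : c ≠ 0) :
    ∫ t, sgn (c * t + b) * (t * gpdf t) = 2 * c * g2 (c ^ 2) b := by
  have hint := integrable_sgn_mul c b
  set r := -b / c with hr
  rcases lt_or_gt_of_ne hc with hneg | hpos
  · -- c < 0
    have h1 : ∀ t ∈ Iic r, sgn (c * t + b) * (t * gpdf t) = t * gpdf t := by
      intro t ht
      have : 0 ≤ c * t + b := by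
        rw [mem_Iic, hr, le_div_iff_of_neg hneg] at ht
        linarith
      simp [sgn, this]
    have h2 : ∀ t ∈ Ioi r, sgn (c * t + b) * (t * gpdf t) = -(t * gpdf t) := by
      intro t ht
      have : ¬ (0 ≤ c * t + b) := by
        rw [mem_Ioi, hr, div_lt_iff_of_neg hneg] at ht
        push_neg; linarith
      simp [sgn, this]
    rw [← intervalIntegral.integral_Iic_add_Ioi hint.integrableOn hint.integrableOn,
      setIntegral_congr_fun measurableSet_Iic h1,
      setIntegral_congr_fun measurableSet_Ioi h2,
      integral_neg, integral_id_mul_gpdf_Iic, integral_id_mul_gpdf_Ioi,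
      g2_sq c b hc]
    have : gpdf r = gpdf (b / c) := by
      rw [hr, neg_div, gpdf_even]
    rw [this, abs_of_neg hneg, inv_neg]
    field_simp
    ring
  · -- c > 0
    have h1 : ∀ t ∈ Iio r, sgn (c * t + b) * (t * gpdf t) = -(t * gpdf t) := by
      intro t ht
      have : ¬ (0 ≤ c * t + b) := by
        rw [mem_Iio, hr, lt_div_iff₀ hpos] at ht
        push_neg; linarith
      simp [sgn, this]
    have h2 : ∀ t ∈ Ici r, sgn (c * t + b) * (t * gpdf t) = t * gpdf t := by
      intro t ht
      have : 0 ≤ c * t + b := by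
        rw [mem_Ici, hr, div_le_iff₀ hpos] at ht
        linarith
      simp [sgn, this]
    rw [← intervalIntegral.integral_Iio_add_Ici hint.integrableOn hint.integrableOn,
      setIntegral_congr_fun measurableSet_Iio h1,
      setIntegral_congr_fun measurableSet_Ici h2,
      integral_neg, ← integral_Iic_eq_integral_Iio, integral_Ici_eq_integral_Ioi,
      integral_id_mul_gpdf_Iic, integral_id_mul_gpdf_Ioi, g2_sq c b hc]
    have : gpdf r = gpdf (b / c) := by
      rw [hr, neg_div, gpdf_even]
    rw [this, abs_of_pos hpos]
    field_simp
    ring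

lemma lemB (s w b : ℝ) (hs : 0 < s) :
    ∫ t, g2 s (w * t + b) * gpdf t = g2 (s + w ^ 2) b := by
  have hsw : 0 < s + w ^ 2 := by positivity
  set β : ℝ := (s + w ^ 2) / (2 * s) with hβ
  have hβpos : 0 < β := by positivity
  set m : ℝ := w * b / (s + w ^ 2) with hm
  set C : ℝ := (Real.sqrt (2 * Real.pi * s))⁻¹ * (Real.sqrt (2 * Real.pi))⁻¹ *
      Real.exp (-b ^ 2 / (2 * (s + w ^ 2))) with hC
  have hpt : ∀ t : ℝ, g2 s (w * t + b) * gpdf t = C * Real.exp (-β * (t + m) ^ 2) := by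
    intro t
    unfold g2 gpdf
    rw [hC]
    have hexp : -(w * t + b) ^ 2 / (2 * s) + -t ^ 2 / 2
        = -b ^ 2 / (2 * (s + w ^ 2)) + -β * (t + m) ^ 2 := by
      rw [hβ, hm]
      field_simp
      ring
    calc (Real.sqrt (2 * Real.pi * s))⁻¹ * Real.exp (-(w * t + b) ^ 2 / (2 * s)) *
          ((Real.sqrt (2 * Real.pi))⁻¹ * Real.exp (-t ^ 2 / 2))
        = (Real.sqrt (2 * Real.pi * s))⁻¹ * (Real.sqrt (2 * Real.pi))⁻¹ *
          Real.exp (-(w * t + b) ^ 2 / (2 * s) + -t ^ 2 / 2) := by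
          rw [Real.exp_add]; ring
      _ = (Real.sqrt (2 * Real.pi * s))⁻¹ * (Real.sqrt (2 * Real.pi))⁻¹ *
          Real.exp (-b ^ 2 / (2 * (s + w ^ 2))) * Real.exp (-β * (t + m) ^ 2) := by
          rw [hexp, Real.exp_add]; ring
  simp only [hpt]
  rw [MeasureTheory.integral_const_mul]
  rw [show (fun t : ℝ => Real.exp (-β * (t + m) ^ 2)) = fun t => (fun u => Real.exp (-β * u ^ 2)) (t + m) from rfl,
    integral_add_right_eq_self (fun u : ℝ => Real.exp (-β * u ^ 2)) m,
    integral_gaussian]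
  -- algebra
  rw [hC, hβ]
  unfold g2
  rw [show Real.pi / ((s + w ^ 2) / (2 * s)) = (2 * Real.pi * s) / (s + w ^ 2) by
    field_simp]
  rw [Real.sqrt_div (by positivity : (0:ℝ) ≤ 2 * Real.pi * s) (s + w ^ 2),
    show 2 * Real.pi * (s + w ^ 2) = (2 * Real.pi) * (s + w ^ 2) by ring,
    Real.sqrt_mul (by positivity : (0:ℝ) ≤ 2 * Real.pi)]
  have h1 : Real.sqrt (2 * Real.pi * s) ≠ 0 := by positivity
  have h2 : Real.sqrt (2 * Real.pi) ≠ 0 := by positivity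
  have h3 : Real.sqrt (s + w ^ 2) ≠ 0 := by positivity
  field_simp
  ring
  rw [← Real.sqrt_mul (by positivity)]
  congr 1
  ring

lemma continuous_g2 (s : ℝ) : Continuous (g2 s) := by
  unfold g2
  fun_prop

lemma g2_nonneg (s b : ℝ) : 0 ≤ g2 s b := by unfold g2; positivity

lemma g2_le (s b : ℝ) (hs : 0 < s) : g2 s b ≤ (Real.sqrt (2 * Real.pi * s))⁻¹ := by
  unfold g2
  have h1 : Real.exp (-b ^ 2 / (2 * s)) ≤ 1 := by
    rw [Real.exp_le_one_iff]
    exact div_nonpos_of_nonpos_of_nonneg (neg_nonpos.mpr (sq_nonneg b)) (by positivity)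
  exact mul_le_of_le_one_right (by positivity) h1

lemma lemC (m : ℕ) (w : Fin m → ℝ) (s : ℝ) (hs : 0 < s) (b : ℝ) :
    ∫ y, g2 s ((∑ j, w j * y j) + b) ∂(Measure.pi fun _ : Fin m => gaussianReal 0 1)
      = g2 (s + ∑ j, w j ^ 2) b := by
  induction m generalizing s b with
  | zero => simp
  | succ m ih =>
      have hmp := measurePreserving_piFinSuccAbove (fun _ : Fin (m + 1) => gaussianReal 0 1) 0
      set e := MeasurableEquiv.piFinSuccAbove (fun _ : Fin (m + 1) => ℝ) 0 with he
      rw [← ((hmp.symm e).integral_comp e.symm.measurableEmbedding _)]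
      have hes : ∀ z : ℝ × (Fin m → ℝ), e.symm z = Fin.insertNth 0 z.1 z.2 := fun z => rfl
      have heval : ∀ z : ℝ × (Fin m → ℝ),
          (∑ j, w j * (e.symm z) j) + b
            = w 0 * z.1 + ((∑ j, w (Fin.succ j) * z.2 j) + b) := by
        intro z
        rw [hes, Fin.sum_univ_succ]
        simp [Fin.insertNth_zero]
        ring
      simp_rw [heval]
      have hmeas : Measurable fun z : ℝ × (Fin m → ℝ) =>
          w 0 * z.1 + ((∑ j, w (Fin.succ j) * z.2 j) + b) :=
        (measurable_fst.const_mul _).add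
          ((Finset.univ.measurable_sum fun j _ =>
            ((measurable_pi_apply j).comp measurable_snd).const_mul _).add_const b)
      have hint : Integrable (fun z : ℝ × (Fin m → ℝ) =>
          g2 s (w 0 * z.1 + ((∑ j, w (Fin.succ j) * z.2 j) + b)))
          ((gaussianReal 0 1).prod (Measure.pi fun _ : Fin m => gaussianReal 0 1)) := by
        refine Integrable.mono' (integrable_const ((Real.sqrt (2 * Real.pi * s))⁻¹)) ?_
          (ae_of_all _ fun z => ?_)
        · exact ((continuous_g2 s).measurable.comp hmeas).aestronglyMeasurable
        · rw [Real.norm_eq_abs, abs_of_nonneg (g2_nonneg _ _)]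
          exact g2_le _ _ hs
      rw [integral_prod _ hint]
      have hinner : ∀ t : ℝ,
          ∫ y, g2 s (w 0 * t + ((∑ j, w (Fin.succ j) * y j) + b))
            ∂(Measure.pi fun _ : Fin m => gaussianReal 0 1)
          = g2 (s + ∑ j, w (Fin.succ j) ^ 2) (w 0 * t + b) := by
        intro t
        have := ih (fun j => w (Fin.succ j)) s hs (w 0 * t + b)
        rw [← this]
        congr 1 with y
        congr 1
        ring
      simp_rw [hinner]
      rw [integral_gaussianReal_eq, lemB _ _ _ (by positivity), Fin.sum_univ_succ]
      congr 1
      ring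

lemma integral_id_mul_gpdf_total : ∫ t : ℝ, t * gpdf t = 0 := by
  rw [← intervalIntegral.integral_Iic_add_Ioi (b := (0:ℝ))
    integrable_id_mul_gpdf.integrableOn integrable_id_mul_gpdf.integrableOn,
    integral_id_mul_gpdf_Iic, integral_id_mul_gpdf_Ioi]
  ring

lemma integrable_id_gaussian : Integrable (fun t : ℝ => t) (gaussianReal 0 1) := by
  rw [gaussianReal_of_var_ne_zero _ one_ne_zero, gaussianPDF_def,
    integrable_withDensity_iff ((measurable_gaussianPDFReal 0 1).ennreal_ofReal)
      (ae_of_all _ fun t => ENNReal.ofReal_lt_top)]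
  refine integrable_id_mul_gpdf.congr (ae_of_all _ fun t => ?_)
  show t * gpdf t = t * (ENNReal.ofReal (gaussianPDFReal 0 1 t)).toReal
  rw [ENNReal.toReal_ofReal (gaussianPDFReal_nonneg 0 1 t), gaussianPDFReal_one_eq]

noncomputable def stdGaussian (n : ℕ) : Measure (Fin n → ℝ) :=
  Measure.pi fun _ => gaussianReal 0 1

/-- The degree-1 Chow parameters of the LTF `x ↦ sign(v·x + θ)` with respect to the
standard Gaussian are `2 G(θ) v`. -/
theorem chow_parameters_of_LTF (n : ℕ) (v : Fin n → ℝ) (θ : ℝ)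
    (hv : ∑ i, v i ^ 2 = 1) (i : Fin n) :
    ∫ x, sgn ((∑ j, v j * x j) + θ) * x i ∂(stdGaussian n) = 2 * gpdf θ * v i := by
  obtain ⟨m, rfl⟩ : ∃ m, n = m + 1 := ⟨n - 1, (Nat.succ_pred_eq_of_pos i.pos).symm⟩
  unfold _root_.stdGaussian
  have hmp := measurePreserving_piFinSuccAbove (fun _ : Fin (m + 1) => gaussianReal 0 1) i
  set e := MeasurableEquiv.piFinSuccAbove (fun _ : Fin (m + 1) => ℝ) i with he
  rw [← ((hmp.symm e).integral_comp e.symm.measurableEmbedding _)]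
  have heval : ∀ z : ℝ × (Fin m → ℝ),
      (sgn ((∑ j, v j * (e.symm z) j) + θ) * (e.symm z) i)
        = sgn (v i * z.1 + ((∑ j, v (i.succAbove j) * z.2 j) + θ)) * z.1 := by
    intro z
    rw [Fin.sum_univ_succAbove (fun j => v j * (e.symm z) j) i]
    have hz : e.symm z = i.insertNth z.1 z.2 := rfl
    rw [hz]
    simp only [Fin.insertNth_apply_same, Fin.insertNth_apply_succAbove, add_assoc]
  simp_rw [heval]
  have hmeasL : Measurable fun z : ℝ × (Fin m → ℝ) => ∑ j, v (i.succAbove j) * z.2 j :=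
    Finset.univ.measurable_sum fun j _ =>
      ((measurable_pi_apply j).comp measurable_snd).const_mul _
  have hfst : Integrable (fun z : ℝ × (Fin m → ℝ) => z.1)
      ((gaussianReal 0 1).prod (Measure.pi fun _ : Fin m => gaussianReal 0 1)) := by
    have hmap : (((gaussianReal 0 1).prod
        (Measure.pi fun _ : Fin m => gaussianReal 0 1))).map Prod.fst = gaussianReal 0 1 := by
      rw [Measure.map_fst_prod]; simp
    have h2 := (integrable_map_measure (f := Prod.fst) (g := fun t : ℝ => t)
      (by rw [hmap]; exact integrable_id_gaussian.aestronglyMeasurable)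
      measurable_fst.aemeasurable)
    rw [hmap] at h2
    exact h2.mp integrable_id_gaussian
  have hint : Integrable (fun z : ℝ × (Fin m → ℝ) =>
      sgn (v i * z.1 + ((∑ j, v (i.succAbove j) * z.2 j) + θ)) * z.1)
      ((gaussianReal 0 1).prod (Measure.pi fun _ : Fin m => gaussianReal 0 1)) := by
    refine Integrable.mono' hfst.abs ?_ (ae_of_all _ fun z => ?_)
    · exact ((measurable_sgn.comp ((measurable_fst.const_mul (v i)).add
        (hmeasL.add_const θ))).mul measurable_fst).aestronglyMeasurable
    · rw [Real.norm_eq_abs, abs_mul]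
      calc |sgn (v i * z.1 + ((∑ j, v (i.succAbove j) * z.2 j) + θ))| * |z.1|
          ≤ 1 * |z.1| := mul_le_mul_of_nonneg_right (abs_sgn_le _) (abs_nonneg _)
        _ = |z.1| := one_mul _
  rw [integral_prod_symm _ hint]
  by_cases hc : v i = 0
  · simp only [hc, zero_mul, zero_add]
    have hinner : ∀ y : Fin m → ℝ,
        ∫ t, sgn ((∑ j, v (i.succAbove j) * y j) + θ) * t ∂(gaussianReal 0 1) = 0 := by
      intro y
      rw [integral_gaussianReal_eq]
      simp_rw [mul_assoc]
      rw [MeasureTheory.integral_const_mul, integral_id_mul_gpdf_total]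
      ring
    simp_rw [hinner]
    simp
  · have hinner : ∀ y : Fin m → ℝ,
        ∫ t, sgn (v i * t + ((∑ j, v (i.succAbove j) * y j) + θ)) * t ∂(gaussianReal 0 1)
          = 2 * v i * g2 (v i ^ 2) ((∑ j, v (i.succAbove j) * y j) + θ) := by
      intro y
      rw [integral_gaussianReal_eq]
      simp_rw [mul_assoc]
      rw [← mul_assoc]
      exact lemA (v i) _ hc
    simp_rw [hinner]
    rw [MeasureTheory.integral_const_mul,
      lemC m (fun j => v (i.succAbove j)) (v i ^ 2) (by positivity) θ]
    have hsum : v i ^ 2 + ∑ j, v (i.succAbove j) ^ 2 = 1 := by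
      rw [← hv, Fin.sum_univ_succAbove (fun j => v j ^ 2) i]
    rw [hsum, ← gpdf_eq]
    ring
end

section
/- For any R > 0, d a positive integer, ε > 0, and a > 0 defined by exp(−(a/R)^{2/d}) = ε, we have ∫_a^∞ exp(−(T/R)^{2/d})·T dT ≤ (d²/2)·ε·(d + ln(1/ε))^{d−1}·R². -/
open MeasureTheory ProbabilityTheory

lemma aux_factorial_le (k m : ℕ) : (k + m).factorial ≤ k.factorial * (k + m) ^ m := by
  induction m with
  | zero => simp
  | succ m ih =>
    have h1 : (k + (m+1)).factorial = (k + m + 1) * (k + m).factorial := by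
      rw [show k + (m+1) = (k+m) + 1 by ring, Nat.factorial_succ]
    rw [h1]
    calc (k + m + 1) * (k + m).factorial ≤ (k + m + 1) * (k.factorial * (k + m) ^ m) :=
          Nat.mul_le_mul_left _ ih
      _ ≤ (k + m + 1) * (k.factorial * (k + m + 1) ^ m) := by
          apply Nat.mul_le_mul_left
          exact Nat.mul_le_mul_left _ (Nat.pow_le_pow_left (Nat.le_succ _) m)
      _ = k.factorial * (k + (m+1)) ^ (m+1) := by ring_nf
      _ = k.factorial * (k + (m+1)) ^ (m+1) := rfl

set_option maxHeartbeats 1000000 in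
/-- Tail integral bound: if exp(-(a/R)^{2/d}) = ε then
∫_a^∞ exp(-(T/R)^{2/d}) T dT ≤ (d²/2) ε (d + ln(1/ε))^{d-1} R². -/
theorem damn_integral (R ε a : ℝ) (d : ℕ) (hR : 0 < R) (hd : 1 ≤ d) (hε : 0 < ε)
    (ha : 0 ≤ a) (haε : Real.exp (-((a / R) ^ ((2 : ℝ) / d))) = ε) :
    (∫ T in Set.Ici a, Real.exp (-((T / R) ^ ((2 : ℝ) / d))) * T)
      ≤ ((d : ℝ) ^ 2 / 2) * ε * ((d : ℝ) + Real.log (1 / ε)) ^ (d - 1) * R ^ 2 := by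
  have hd0 : (0:ℝ) < (d:ℝ) := by exact_mod_cast Nat.lt_of_lt_of_le Nat.zero_lt_one hd
  have hdne : (d:ℝ) ≠ 0 := ne_of_gt hd0
  set c : ℝ := 2 / d with hc
  have hc0 : 0 < c := by positivity
  set co : ℕ → ℝ := fun k => ((d-1).factorial : ℝ) / (k.factorial : ℝ) with hco
  set P : ℝ → ℝ := fun u => ∑ k ∈ Finset.range d, co k * u ^ k with hP
  -- derivative of P
  have hPd : ∀ u : ℝ, HasDerivAt P (P u - u ^ (d - 1)) u := by
    intro u
    have h1 : HasDerivAt P (∑ k ∈ Finset.range d, co k * ((k:ℝ) * u ^ (k - 1))) u := by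
      apply HasDerivAt.fun_sum
      intro k _
      exact (hasDerivAt_pow k u).const_mul (co k)
    convert h1 using 1
    obtain ⟨m, rfl⟩ : ∃ m, d = m + 1 := ⟨d - 1, (Nat.succ_pred_eq_of_pos hd).symm⟩
    rw [Finset.sum_range_succ']
    simp only [hP, Nat.cast_zero]
    rw [Finset.sum_range_succ]
    have hcm : co m = 1 := by
      simp [hco, Nat.factorial_ne_zero, div_self]
    have hstep : ∀ j, co (j+1) * ((j+1:ℕ):ℝ) = co j := by
      intro j
      simp only [hco, Nat.factorial_succ]
      push_cast
      field_simp
    have : ∀ j ∈ Finset.range m, co j * u ^ j =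
        co (j+1) * (((j+1:ℕ):ℝ) * u ^ (j+1-1)) := by
      intro j _
      rw [show j+1-1 = j from rfl, ← mul_assoc, hstep j]
    rw [← Finset.sum_congr rfl this]
    rw [Nat.add_sub_cancel, hcm]
    ring
  -- derivative of u ↦ exp(-u) * P u
  have hHd : ∀ u : ℝ, HasDerivAt (fun u => Real.exp (-u) * P u)
      (-(Real.exp (-u) * u ^ (d-1))) u := by
    intro u
    have he : HasDerivAt (fun u : ℝ => Real.exp (-u)) (-Real.exp (-u)) u := by
      simpa using (hasDerivAt_neg' u).exp
    have := he.fun_mul (hPd u)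
    exact this.congr_deriv (by ring)
  set G : ℝ → ℝ := fun T =>
    -((d:ℝ)/2 * R^2 * (Real.exp (-((T/R) ^ c)) * P ((T/R) ^ c))) with hGdef
  -- continuity of G
  have hUcont : Continuous fun T : ℝ => (T/R) ^ c :=
    (Real.continuous_rpow_const hc0.le).comp (continuous_id.div_const R)
  have hPcont : Continuous P := by
    apply continuous_finset_sum
    intro k _
    exact continuous_const.mul (continuous_pow k)
  have hGcont : Continuous G := by
    apply Continuous.neg
    apply Continuous.mul continuous_const
    apply Continuous.mul
    · exact (Real.continuous_exp.comp hUcont.neg)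
    · exact hPcont.comp hUcont
  -- derivative of G on Ioi a
  have hGd : ∀ T ∈ Set.Ioi a, HasDerivAt G (Real.exp (-((T/R) ^ c)) * T) T := by
    intro T hT
    have hT0 : 0 < T := lt_of_le_of_lt ha hT
    have hTR : 0 < T / R := div_pos hT0 hR
    have h1 : HasDerivAt (fun T : ℝ => (T/R) ^ c) (c * (T/R) ^ (c-1) * (1/R)) T := by
      have := (Real.hasDerivAt_rpow_const (p := c) (Or.inl (ne_of_gt hTR))).comp T
        ((hasDerivAt_id T).div_const R)
      exact this
    have h2 := (hHd ((T/R) ^ c)).comp T h1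
    have h3 : HasDerivAt G
        (-((d:ℝ)/2 * R^2 * (-(Real.exp (-((T/R)^c)) * ((T/R)^c) ^ (d-1)) *
          (c * (T/R) ^ (c-1) * (1/R))))) T := ((h2.const_mul ((d:ℝ)/2 * R^2)).neg)
    convert h3 using 1
    have hrw : ((T/R) ^ c) ^ (d-1) = (T/R) ^ (c * ((d:ℝ) - 1)) := by
      rw [← Real.rpow_natCast ((T/R) ^ c) (d-1), ← Real.rpow_mul hTR.le]
      congr 1
      rw [Nat.cast_sub hd]
      push_cast; ring
    have hcomb : (T/R) ^ (c * ((d:ℝ) - 1)) * (T/R) ^ (c - 1) = T / R := by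
      rw [← Real.rpow_add hTR]
      have hcd : c * (d:ℝ) = 2 := by rw [hc]; field_simp
      have : c * ((d:ℝ) - 1) + (c - 1) = 1 := by nlinarith [hcd]
      rw [this, Real.rpow_one]
    have hdc : (d:ℝ)/2 * c = 1 := by rw [hc]; field_simp
    rw [hrw]
    calc Real.exp (-(T/R)^c) * T
        = ((d:ℝ)/2*c) * (R^2 * (1/R)) * (Real.exp (-(T/R)^c) * (T/R)) := by
          rw [hdc]; field_simp
      _ = -((d:ℝ)/2*R^2*(-(Real.exp (-(T/R)^c) * (T/R) ^ (c*((d:ℝ)-1))) *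
            (c * (T/R) ^ (c-1) * (1/R)))) := by
          rw [(by ring : -((d:ℝ)/2*R^2*(-(Real.exp (-(T/R)^c) * (T/R) ^ (c*((d:ℝ)-1))) *
            (c * (T/R) ^ (c-1) * (1/R)))) = ((d:ℝ)/2*c) * (R^2 * (1/R)) *
            (Real.exp (-(T/R)^c) * ((T/R) ^ (c*((d:ℝ)-1)) * (T/R) ^ (c-1)))), hcomb]
  -- tendsto
  have hGtend : Filter.Tendsto G Filter.atTop (nhds 0) := by
    have hu : Filter.Tendsto (fun T : ℝ => (T/R) ^ c) Filter.atTop Filter.atTop :=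
      (tendsto_rpow_atTop hc0).comp (Filter.tendsto_id.atTop_div_const hR)
    have hterm : Filter.Tendsto (fun u : ℝ => Real.exp (-u) * P u) Filter.atTop (nhds 0) := by
      have : ∀ u : ℝ, Real.exp (-u) * P u = ∑ k ∈ Finset.range d, co k * (u ^ k * Real.exp (-u)) := by
        intro u
        simp only [hP, Finset.mul_sum]
        apply Finset.sum_congr rfl
        intro k _; ring
      simp only [this]
      have := tendsto_finset_sum (Finset.range d) (fun k _ =>
        (Real.tendsto_pow_mul_exp_neg_atTop_nhds_zero k).const_mul (co k))
      simpa using this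
    have := ((hterm.comp hu).const_mul ((d:ℝ)/2 * R^2)).neg
    simpa using this
  -- apply the integral formula
  have hval := integral_Ioi_of_hasDerivAt_of_nonneg (g := G)
    (g' := fun T => Real.exp (-((T/R) ^ c)) * T)
    (hGcont.continuousAt.continuousWithinAt) hGd
    (fun x hx => mul_nonneg (Real.exp_pos _).le (le_of_lt (lt_of_le_of_lt ha hx)))
    hGtend
  have hIci : (∫ T in Set.Ici a, Real.exp (-((T / R) ^ c)) * T)
      = ∫ T in Set.Ioi a, Real.exp (-((T / R) ^ c)) * T := by
    rw [MeasureTheory.integral_Ici_eq_integral_Ioi]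
  rw [hIci, hval]
  -- now bound 0 - G a
  set b : ℝ := (a/R) ^ c with hb
  have hb0 : 0 ≤ b := Real.rpow_nonneg (div_nonneg ha hR.le) c
  have hlog : Real.log (1/ε) = b := by
    rw [← haε, one_div, ← Real.exp_neg, Real.log_exp, neg_neg]
  have hGa : 0 - G a = (d:ℝ)/2 * R^2 * (ε * P b) := by
    simp only [hGdef, hb, ← haε]
    ring
  rw [hGa, hlog]
  -- key inequality : P b ≤ (d + b)^(d-1)
  have hPb : P b ≤ ((d:ℝ) + b) ^ (d-1) := by
    have hbinom : ((d:ℝ) + b) ^ (d-1) = (b + (d:ℝ)) ^ (d-1) := by ring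
    rw [hbinom, add_pow]
    rw [Nat.sub_add_cancel hd]
    apply Finset.sum_le_sum
    intro k hk
    have hk' : k ≤ d - 1 := Nat.le_pred_of_lt (Finset.mem_range.mp hk)
    have hfact : ((d-1).factorial : ℝ) ≤ (k.factorial : ℝ) * (d:ℝ) ^ (d-1-k) := by
      have h1 : (d-1).factorial ≤ k.factorial * (d-1) ^ (d-1-k) := by
        have := aux_factorial_le k (d-1-k)
        rwa [Nat.add_sub_cancel' hk'] at this
      have h2 : k.factorial * (d-1) ^ (d-1-k) ≤ k.factorial * d ^ (d-1-k) :=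
        Nat.mul_le_mul_left _ (Nat.pow_le_pow_left (Nat.sub_le d 1) _)
      calc ((d-1).factorial : ℝ) ≤ ((k.factorial * (d-1) ^ (d-1-k) : ℕ) : ℝ) := by
            exact_mod_cast h1
        _ ≤ ((k.factorial * d ^ (d-1-k) : ℕ) : ℝ) := by exact_mod_cast h2
        _ = (k.factorial : ℝ) * (d:ℝ) ^ (d-1-k) := by push_cast; ring
    have hcok : co k ≤ (d:ℝ) ^ (d-1-k) := by
      rw [hco, div_le_iff₀ (by positivity : (0:ℝ) < (k.factorial : ℝ))]
      linarith [hfact]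
    have hchoose : (1:ℝ) ≤ ((d-1).choose k : ℝ) := by
      exact_mod_cast Nat.one_le_iff_ne_zero.mpr (Nat.choose_pos hk').ne'
    calc co k * b ^ k ≤ (d:ℝ) ^ (d-1-k) * b ^ k := by
          apply mul_le_mul_of_nonneg_right hcok (pow_nonneg hb0 k)
      _ ≤ b ^ k * (d:ℝ) ^ (d-1-k) * ((d-1).choose k : ℝ) := by
          rw [mul_comm (b^k)]
          nlinarith [pow_nonneg hb0 k, pow_nonneg hd0.le (d-1-k),
            mul_nonneg (pow_nonneg hd0.le (d-1-k)) (pow_nonneg hb0 k)]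
  have hpow_nonneg : (0:ℝ) ≤ ((d:ℝ) + b) ^ (d-1) :=
    pow_nonneg (by linarith) _
  have hPb0 : 0 ≤ P b := by
    apply Finset.sum_nonneg
    intro k _
    exact mul_nonneg (by positivity) (pow_nonneg hb0 k)
  calc (d:ℝ)/2 * R^2 * (ε * P b) ≤ (d:ℝ)/2 * R^2 * (ε * ((d:ℝ) + b) ^ (d-1)) := by
        apply mul_le_mul_of_nonneg_left _ (by positivity)
        exact mul_le_mul_of_nonneg_left hPb hε.le
    _ ≤ ((d : ℝ) ^ 2 / 2) * ε * ((d : ℝ) + b) ^ (d - 1) * R ^ 2 := by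
        have h1 : (d:ℝ)/2 ≤ (d:ℝ)^2/2 := by nlinarith [hd0, (by exact_mod_cast hd : (1:ℝ) ≤ (d:ℝ))]
        have h2 : 0 ≤ ε * ((d:ℝ) + b) ^ (d-1) := mul_nonneg hε.le hpow_nonneg
        nlinarith [sq_nonneg R, mul_nonneg h2 (sq_nonneg R)]
end
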